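/- Let f : ℝⁿ → ℝⁿ be continuously differentiable and admit a global flow φ, and suppose there exists a continuously differentiable function V : ℝⁿ → ℝ such that f(x) · ∇V(x) ≥ ‖f(x)‖² for all x ∈ ℝⁿ. Then the system has no nonconstant periodic orbits: if φ(x, T) = x for some x ∈ ℝⁿ and some T > 0, then f(x) = 0 (so φ(x, t) = x for all t). -/

import Mathlib

open Filter Topology Set

/-- If `V` is a C¹ function with `f(x) · ∇V(x) ≥ ‖f(x)‖²` everywhere, then
the global flow `φ` of the C¹ vector field `f` has no nonconstant periodic orbits: any
point returning to itself after a positive time `T` is a stationary point (so its orbit is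
constant). -/
theorem no_nonconstant_periodic_orbits
    (n : ℕ)
    (f : EuclideanSpace ℝ (Fin n) → EuclideanSpace ℝ (Fin n))
    (hf : ContDiff ℝ 1 f)
    (φ : EuclideanSpace ℝ (Fin n) → ℝ → EuclideanSpace ℝ (Fin n))
    (hφ : ContDiff ℝ 1 (fun p : EuclideanSpace ℝ (Fin n) × ℝ => φ p.1 p.2))
    (hφ0 : ∀ x, φ x 0 = x)
    (hφ' : ∀ x t, HasDerivAt (φ x) (f (φ x t)) t)
    (V : EuclideanSpace ℝ (Fin n) → ℝ)
    (hV : ContDiff ℝ 1 V)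
    (hVf : ∀ x, ‖f x‖ ^ 2 ≤ fderiv ℝ V x (f x))
    (x : EuclideanSpace ℝ (Fin n)) (T : ℝ) (hT : 0 < T) (hper : φ x T = x) :
    f x = 0 ∧ ∀ t : ℝ, φ x t = x := by
  -- g(t) = V(φ x t)
  set g : ℝ → ℝ := fun t => V (φ x t) with hg_def
  have hg' : ∀ t, HasDerivAt g (fderiv ℝ V (φ x t) (f (φ x t))) t := fun t =>
    ((hV.differentiable one_ne_zero (φ x t)).hasFDerivAt).comp_hasDerivAt t (hφ' x t)
  have hgdiff : Differentiable ℝ g := fun t => (hg' t).differentiableAt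
  have hderiv_nonneg : ∀ t, 0 ≤ deriv g t := by
    intro t
    rw [(hg' t).deriv]
    exact le_trans (by positivity) (hVf (φ x t))
  have hmono : Monotone g := monotone_of_deriv_nonneg hgdiff hderiv_nonneg
  have hgT : g T = g 0 := by simp [hg_def, hper, hφ0]
  have hconst : ∀ t ∈ Icc (0:ℝ) T, g t = g 0 :=
    fun t ht => le_antisymm (hgT ▸ hmono ht.2) (hmono ht.1)
  -- f vanishes along the orbit inside (0,T)
  have hzero : ∀ t ∈ Ioo (0:ℝ) T, f (φ x t) = 0 := by
    intro t ht
    have hgc : ∀ s ∈ Ioo (0:ℝ) T, g s = g 0 := fun s hs => hconst s (Ioo_subset_Icc_self hs)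
    have : deriv g t = 0 := by
      have : g =ᶠ[𝓝 t] fun _ => g 0 :=
        eventually_of_mem (isOpen_Ioo.mem_nhds ht) hgc
      rw [this.deriv_eq, deriv_const]
    rw [(hg' t).deriv] at this
    have h2 : ‖f (φ x t)‖ ^ 2 ≤ 0 := this ▸ hVf (φ x t)
    have : ‖f (φ x t)‖ = 0 := by nlinarith [norm_nonneg (f (φ x t))]
    exact norm_eq_zero.mp this
  -- by continuity, f x = 0
  have hφcont : Continuous (φ x) := by
    have := hφ.continuous
    exact this.comp (Continuous.prodMk_right x)
  have hfx : f x = 0 := by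
    have hcont : ContinuousAt (fun t => f (φ x t)) 0 :=
      (hf.continuous.comp hφcont).continuousAt
    have h0cl : (0:ℝ) ∈ closure (Ioo 0 T) := by
      rw [closure_Ioo hT.ne]; exact ⟨le_rfl, hT.le⟩
    have hne : (𝓝[Ioo (0:ℝ) T] 0).NeBot := mem_closure_iff_nhdsWithin_neBot.mp h0cl
    have h1 : Tendsto (fun t => f (φ x t)) (𝓝[Ioo (0:ℝ) T] 0) (𝓝 (f (φ x 0))) :=
      (hcont.tendsto).mono_left nhdsWithin_le_nhds
    have h2 : Tendsto (fun t => f (φ x t)) (𝓝[Ioo (0:ℝ) T] 0) (𝓝 0) :=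
      tendsto_nhds_of_eventually_eq (eventually_mem_nhdsWithin.mono fun s hs => hzero s hs)
    have := tendsto_nhds_unique h1 h2
    rwa [hφ0] at this
  refine ⟨hfx, ?_⟩
  -- constancy of orbit via ODE uniqueness and a clopen argument
  set S : Set ℝ := {t | φ x t = x} with hS_def
  have hSclosed : IsClosed S := isClosed_eq hφcont continuous_const
  have hSopen : IsOpen S := by
    rw [isOpen_iff_mem_nhds]
    intro t₀ ht₀
    obtain ⟨K, s, hs, hlip⟩ := (hf.contDiffAt (x := x)).exists_lipschitzOnWith
    have heq : φ x =ᶠ[𝓝 t₀] fun _ => x := by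
      apply ODE_solution_unique_of_eventually
        (v := fun _ y => f y) (s := fun _ => s) (K := K) (t₀ := t₀)
        (Eventually.of_forall fun _ => hlip)
      · have hmem : ∀ᶠ t in 𝓝 t₀, φ x t ∈ s := by
          have : ContinuousAt (φ x) t₀ := hφcont.continuousAt
          have hx : φ x t₀ = x := ht₀
          have hs' : s ∈ 𝓝 (φ x t₀) := by rw [hx]; exact hs
          exact this.preimage_mem_nhds hs'
        exact hmem.mono fun t ht => ⟨hφ' x t, ht⟩
      · refine Eventually.of_forall fun t => ⟨?_, mem_of_mem_nhds hs⟩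
        simpa [hfx] using hasDerivAt_const t x
      · exact ht₀
    exact heq.mono fun t ht => ht
  have : S = univ := by
    rcases isClopen_iff.mp ⟨hSclosed, hSopen⟩ with h | h
    · exact absurd (hφ0 x) (by simp [hS_def] at h ⊢; exact eq_empty_iff_forall_notMem.mp h 0)
    · exact h
  exact fun t => show t ∈ S from this.symm ▸ mem_univ t
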